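/- arXiv:1806.03712 — 3 statements merged into one kernel-verified Lean document; each statement's English description precedes it below -/
import Mathlib

section
/- Every element of the monoid M_ℓ can be written in the form θ^k X^n for some k ∈ ℤ_ℓ and n ∈ ℕ. -/
/-- The free product monoid `W_ℓ = ℕ ∗ ℤ_ℓ` (with the convention `ℤ_0 = ℤ`,
realized via `ZMod ℓ`). -/
abbrev Wl (ℓ : ℕ) : Type := Monoid.Coprod (Multiplicative ℕ) (Multiplicative (ZMod ℓ))

/-- The generator `X` of the factor `ℕ` of `W_ℓ`. -/
def Xw (ℓ : ℕ) : Wl ℓ := Monoid.Coprod.inl (Multiplicative.ofAdd (1 : ℕ))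

/-- The element `θ^k` of `W_ℓ` for `k ∈ ℤ_ℓ`; `θw ℓ 1` is the generator `θ`
of the factor `ℤ_ℓ` and `θw ℓ (-1)` is its inverse `θ⁻¹`. -/
def θw (ℓ : ℕ) (k : ZMod ℓ) : Wl ℓ := Monoid.Coprod.inr (Multiplicative.ofAdd k)

/-- The monoid congruence on `W_ℓ` generated by the relation `Xθ = θ⁻¹X`. -/
def MlCon (ℓ : ℕ) : Con (Wl ℓ) :=
  conGen (fun u v => u = Xw ℓ * θw ℓ 1 ∧ v = θw ℓ (-1) * Xw ℓ)

/-- The monoid `M_ℓ`, quotient of `W_ℓ = ℕ ∗ ℤ_ℓ` by the relation `Xθ = θ⁻¹X`. -/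
abbrev Ml (ℓ : ℕ) : Type := (MlCon ℓ).Quotient

/-- The class of `X` in `M_ℓ`. -/
def Xm (ℓ : ℕ) : Ml ℓ := (MlCon ℓ).mk' (Xw ℓ)

/-- The class of `θ^k` in `M_ℓ`, for `k ∈ ℤ_ℓ`. -/
def Θm (ℓ : ℕ) (k : ZMod ℓ) : Ml ℓ := (MlCon ℓ).mk' (θw ℓ k)

/-- Associativity in `Ml ℓ`, stated with the ambient instances. -/
lemma mlA (ℓ : ℕ) (a b c : Ml ℓ) : a * b * c = a * (b * c) := mul_assoc a b c

lemma Θm_add (ℓ : ℕ) (a b : ZMod ℓ) : Θm ℓ (a + b) = Θm ℓ a * Θm ℓ b := by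
  simp only [Θm, θw]
  rw [← map_mul, ← map_mul]
  rfl

lemma Θm_zero (ℓ : ℕ) : Θm ℓ 0 = 1 := by
  simp only [Θm, θw]
  have : Multiplicative.ofAdd (0 : ZMod ℓ) = 1 := rfl
  rw [this, map_one, map_one]

lemma Θm_mul_Θm_neg (ℓ : ℕ) (k : ZMod ℓ) : Θm ℓ k * Θm ℓ (-k) = 1 := by
  rw [← Θm_add, add_neg_cancel, Θm_zero]

lemma Xm_Θm_one (ℓ : ℕ) : Xm ℓ * Θm ℓ 1 = Θm ℓ (-1) * Xm ℓ := by
  simp only [Xm, Θm, ← map_mul]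
  exact (MlCon ℓ).eq.2 (ConGen.Rel.of _ _ ⟨rfl, rfl⟩)

lemma Xm_Θm_neg_one (ℓ : ℕ) : Xm ℓ * Θm ℓ (-1) = Θm ℓ 1 * Xm ℓ := by
  have e : Θm ℓ 1 * Θm ℓ (-1) = 1 := Θm_mul_Θm_neg ℓ 1
  calc Xm ℓ * Θm ℓ (-1)
      = (Θm ℓ 1 * Θm ℓ (-1)) * (Xm ℓ * Θm ℓ (-1)) := by
        rw [e]; exact (one_mul _).symm
    _ = Θm ℓ 1 * ((Θm ℓ (-1) * Xm ℓ) * Θm ℓ (-1)) := by simp only [mlA]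
    _ = Θm ℓ 1 * ((Xm ℓ * Θm ℓ 1) * Θm ℓ (-1)) := by rw [Xm_Θm_one]
    _ = (Θm ℓ 1 * Xm ℓ) * (Θm ℓ 1 * Θm ℓ (-1)) := by simp only [mlA]
    _ = Θm ℓ 1 * Xm ℓ := by rw [e]; exact mul_one _

lemma Xm_Θm_step (ℓ : ℕ) (a : ZMod ℓ) (h : Xm ℓ * Θm ℓ a = Θm ℓ (-a) * Xm ℓ) :
    Xm ℓ * Θm ℓ (a + 1) = Θm ℓ (-(a + 1)) * Xm ℓ := by
  calc Xm ℓ * Θm ℓ (a + 1)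
      = Xm ℓ * (Θm ℓ a * Θm ℓ 1) := by rw [Θm_add]
    _ = (Xm ℓ * Θm ℓ a) * Θm ℓ 1 := by simp only [mlA]
    _ = (Θm ℓ (-a) * Xm ℓ) * Θm ℓ 1 := by rw [h]
    _ = Θm ℓ (-a) * (Xm ℓ * Θm ℓ 1) := by simp only [mlA]
    _ = Θm ℓ (-a) * (Θm ℓ (-1) * Xm ℓ) := by rw [Xm_Θm_one]
    _ = (Θm ℓ (-a) * Θm ℓ (-1)) * Xm ℓ := by simp only [mlA]
    _ = Θm ℓ (-(a + 1)) * Xm ℓ := by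
        rw [← Θm_add, show (-a + -1 : ZMod ℓ) = -(a + 1) by ring]

lemma Xm_Θm_step' (ℓ : ℕ) (a : ZMod ℓ) (h : Xm ℓ * Θm ℓ a = Θm ℓ (-a) * Xm ℓ) :
    Xm ℓ * Θm ℓ (a - 1) = Θm ℓ (-(a - 1)) * Xm ℓ := by
  calc Xm ℓ * Θm ℓ (a - 1)
      = Xm ℓ * (Θm ℓ a * Θm ℓ (-1)) := by
        rw [show (a - 1 : ZMod ℓ) = a + (-1) by ring, Θm_add]
    _ = (Xm ℓ * Θm ℓ a) * Θm ℓ (-1) := by simp only [mlA]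
    _ = (Θm ℓ (-a) * Xm ℓ) * Θm ℓ (-1) := by rw [h]
    _ = Θm ℓ (-a) * (Xm ℓ * Θm ℓ (-1)) := by simp only [mlA]
    _ = Θm ℓ (-a) * (Θm ℓ 1 * Xm ℓ) := by rw [Xm_Θm_neg_one]
    _ = (Θm ℓ (-a) * Θm ℓ 1) * Xm ℓ := by simp only [mlA]
    _ = Θm ℓ (-(a - 1)) * Xm ℓ := by
        rw [← Θm_add, show (-a + 1 : ZMod ℓ) = -(a - 1) by ring]

lemma Xm_Θm (ℓ : ℕ) (k : ZMod ℓ) : Xm ℓ * Θm ℓ k = Θm ℓ (-k) * Xm ℓ := by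
  obtain ⟨z, rfl⟩ := ZMod.intCast_surjective k
  induction z using Int.induction_on with
  | zero =>
      rw [show ((0 : ℤ) : ZMod ℓ) = 0 by push_cast; ring, neg_zero, Θm_zero]
      exact (mul_one _).trans (one_mul _).symm
  | succ n ih =>
      rw [show ((((n : ℤ) + 1 : ℤ)) : ZMod ℓ) = ((n : ℤ) : ZMod ℓ) + 1 by push_cast; ring]
      exact Xm_Θm_step ℓ _ ih
  | pred n ih =>
      rw [show (((-(n : ℤ)) - 1 : ℤ) : ZMod ℓ) = ((-(n : ℤ) : ℤ) : ZMod ℓ) - 1 by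
        push_cast; ring]
      exact Xm_Θm_step' ℓ _ ih

lemma Xm_pow_Θm (ℓ : ℕ) (j : ℕ) (k : ZMod ℓ) :
    (Xm ℓ) ^ j * Θm ℓ k = Θm ℓ ((-1) ^ j * k) * (Xm ℓ) ^ j := by
  induction j generalizing k with
  | zero =>
      rw [show ((-1 : ZMod ℓ)) ^ 0 * k = k by ring, pow_zero (Xm ℓ)]
      exact (one_mul _).trans (mul_one _).symm
  | succ j ih =>
      calc (Xm ℓ) ^ (j + 1) * Θm ℓ k
          = ((Xm ℓ) ^ j * Xm ℓ) * Θm ℓ k := by rw [pow_succ (Xm ℓ) j]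
        _ = (Xm ℓ) ^ j * (Xm ℓ * Θm ℓ k) := by simp only [mlA]
        _ = (Xm ℓ) ^ j * (Θm ℓ (-k) * Xm ℓ) := by rw [Xm_Θm]
        _ = ((Xm ℓ) ^ j * Θm ℓ (-k)) * Xm ℓ := by simp only [mlA]
        _ = (Θm ℓ ((-1) ^ j * -k) * (Xm ℓ) ^ j) * Xm ℓ := by rw [ih]
        _ = Θm ℓ ((-1) ^ j * -k) * ((Xm ℓ) ^ j * Xm ℓ) := by simp only [mlA]
        _ = Θm ℓ ((-1) ^ (j + 1) * k) * (Xm ℓ) ^ (j + 1) := by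
            rw [pow_succ (Xm ℓ) j,
              show ((-1 : ZMod ℓ)) ^ j * -k = (-1) ^ (j + 1) * k by ring]

lemma mk_inl (ℓ : ℕ) (j : ℕ) :
    (MlCon ℓ).mk' (Monoid.Coprod.inl (Multiplicative.ofAdd j)) = (Xm ℓ) ^ j := by
  have h : (Multiplicative.ofAdd j : Multiplicative ℕ)
      = (Multiplicative.ofAdd (1 : ℕ)) ^ j := by
    rw [← ofAdd_nsmul]; simp
  rw [h, map_pow, map_pow]
  rfl

/-- Every element of `M_ℓ` can be written in the form `θ^k X^n` for some
`k ∈ ℤ_ℓ` and `n ∈ ℕ`. -/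
theorem Ml_normal_form_exists (ℓ : ℕ) (m : Ml ℓ) :
    ∃ (k : ZMod ℓ) (n : ℕ), m = Θm ℓ k * (Xm ℓ) ^ n := by
  obtain ⟨w, rfl⟩ := (MlCon ℓ).mk'_surjective m
  induction w using Monoid.Coprod.induction_on' with
  | one =>
      refine ⟨0, 0, ?_⟩
      rw [map_one, Θm_zero, pow_zero (Xm ℓ)]
      exact (one_mul (1 : Ml ℓ)).symm
  | inl_mul a x ih =>
      obtain ⟨k, n, hx⟩ := ih
      set j := Multiplicative.toAdd a with hj
      have ha : (MlCon ℓ).mk' (Monoid.Coprod.inl a) = (Xm ℓ) ^ j :=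
        mk_inl ℓ j
      refine ⟨(-1) ^ j * k, j + n, ?_⟩
      calc (MlCon ℓ).mk' (Monoid.Coprod.inl a * x)
          = (Xm ℓ) ^ (j) * (Θm ℓ k * (Xm ℓ) ^ n) := by
            rw [map_mul, hx, ha]
        _ = ((Xm ℓ) ^ j * Θm ℓ k) * (Xm ℓ) ^ n := by
            simp only [mlA]
        _ = (Θm ℓ ((-1) ^ j * k) * (Xm ℓ) ^ j) * (Xm ℓ) ^ n := by rw [Xm_pow_Θm]
        _ = Θm ℓ ((-1) ^ j * k) * ((Xm ℓ) ^ j * (Xm ℓ) ^ n) := by simp only [mlA]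
        _ = Θm ℓ ((-1) ^ j * k) * (Xm ℓ) ^ (j + n) := by
            rw [pow_add (Xm ℓ) j n]
  | inr_mul b x ih =>
      obtain ⟨k, n, hx⟩ := ih
      refine ⟨Multiplicative.toAdd b + k, n, ?_⟩
      have hb : (MlCon ℓ).mk' (Monoid.Coprod.inr b)
          = Θm ℓ (Multiplicative.toAdd b) := rfl
      calc (MlCon ℓ).mk' (Monoid.Coprod.inr b * x)
          = Θm ℓ (Multiplicative.toAdd b) * (Θm ℓ k * (Xm ℓ) ^ n) := by
            rw [map_mul, hx, hb]
        _ = (Θm ℓ (Multiplicative.toAdd b) * Θm ℓ k) * (Xm ℓ) ^ n := by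
            simp only [mlA]
        _ = Θm ℓ (Multiplicative.toAdd b + k) * (Xm ℓ) ^ n := by rw [Θm_add]
end

section
/- For k, k' ∈ ℤ_ℓ and n, n' ∈ ℕ, one has θ^k X^n = θ^{k'} X^{n'} in the monoid M_ℓ if and only if n = n' and k = k'. In other words, the normal form θ^k X^n of an element of M_ℓ is unique. -/
noncomputable section AuxMl

/-- The action of `ℤ` on `ZMod ℓ` by sign-alternating negation. -/
def φact (ℓ : ℕ) : Multiplicative ℤ →* MulAut (Multiplicative (ZMod ℓ)) :=
  zpowersHom _ (MulEquiv.inv (Multiplicative (ZMod ℓ)))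

/-- The semidirect product `ZMod ℓ ⋊ ℤ` separating normal forms. -/
abbrev Gtarget (ℓ : ℕ) :=
  SemidirectProduct (Multiplicative (ZMod ℓ)) (Multiplicative ℤ) (φact ℓ)

/-- The canonical map `W_ℓ →* ZMod ℓ ⋊ ℤ`. -/
def fW (ℓ : ℕ) : Wl ℓ →* Gtarget ℓ :=
  Monoid.Coprod.lift (powersHom _ (SemidirectProduct.inr (Multiplicative.ofAdd (1:ℤ))))
    SemidirectProduct.inl

lemma fW_Xw (ℓ : ℕ) : fW ℓ (Xw ℓ) = SemidirectProduct.inr (Multiplicative.ofAdd (1:ℤ)) := by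
  simp [fW, Xw]

lemma fW_θw (ℓ : ℕ) (c : ZMod ℓ) :
    fW ℓ (θw ℓ c) = SemidirectProduct.inl (Multiplicative.ofAdd c) := by
  simp [fW, θw]

lemma MlCon_le_ker (ℓ : ℕ) : MlCon ℓ ≤ Con.ker (fW ℓ) := by
  apply Con.conGen_le.mpr
  rintro u v ⟨rfl, rfl⟩
  show fW ℓ _ = fW ℓ _
  simp only [map_mul, fW_Xw, fW_θw]
  ext
  · simp only [SemidirectProduct.mul_left, ← map_inv, SemidirectProduct.left_inl, SemidirectProduct.left_inr, SemidirectProduct.right_inr, SemidirectProduct.right_inl]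
    simp [φact]
  · simp

/-- The induced map `M_ℓ →* ZMod ℓ ⋊ ℤ`. -/
def fM (ℓ : ℕ) : Ml ℓ →* Gtarget ℓ := Con.lift _ (fW ℓ) (MlCon_le_ker ℓ)

lemma fM_normal (ℓ : ℕ) (k : ZMod ℓ) (n : ℕ) :
    fM ℓ (Θm ℓ k * (Xm ℓ) ^ n) =
      ⟨Multiplicative.ofAdd k, Multiplicative.ofAdd (n : ℤ)⟩ := by
  have h1 : fM ℓ (Θm ℓ k) = SemidirectProduct.inl (Multiplicative.ofAdd k) := by
    simpa [fM, Θm] using fW_θw ℓ k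
  have h2 : fM ℓ (Xm ℓ) = SemidirectProduct.inr (Multiplicative.ofAdd (1:ℤ)) := by
    simpa [fM, Xm] using fW_Xw ℓ
  have h3 : fM ℓ (Xm ℓ ^ n) = (fM ℓ (Xm ℓ)) ^ n := map_pow (fM ℓ) (Xm ℓ) n
  simp only [map_mul, h3, h1, h2]
  rw [← map_pow]
  ext
  · simp [← map_pow, SemidirectProduct.mul_left]
  · simp [SemidirectProduct.mul_right, ← ofAdd_nsmul]

end AuxMl

/-- Uniqueness of the normal form `θ^k X^n` in `M_ℓ`: for `k, k' ∈ ℤ_ℓ` and `n, n' ∈ ℕ`,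
`θ^k X^n = θ^{k'} X^{n'}` in `M_ℓ` if and only if `n = n'` and `k = k'`. -/
theorem Ml_normal_form_unique (ℓ : ℕ) (k k' : ZMod ℓ) (n n' : ℕ) :
    Θm ℓ k * (Xm ℓ) ^ n = Θm ℓ k' * (Xm ℓ) ^ n' ↔ n = n' ∧ k = k' := by
  constructor
  · intro h
    have := congrArg (fM ℓ) h
    rw [fM_normal, fM_normal, SemidirectProduct.ext_iff] at this
    obtain ⟨hk, hn⟩ := this
    have hn' : (n : ℤ) = (n' : ℤ) := Multiplicative.ofAdd.injective hn
    have hk' : k = k' := Multiplicative.ofAdd.injective hk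
    exact ⟨by exact_mod_cast hn', hk'⟩
  · rintro ⟨rfl, rfl⟩
    rfl
end

section
/- Let γ₁, …, γₙ and γ'₁, …, γ'ₙ be elements of Γ with n ≥ 1. The words γ₁⋯γₙ and γ'₁⋯γ'ₙ represent the same element of W(Γ, Λ) if and only if there exist λ₁, …, λ_{n−1} ∈ Λ such that γ'₁ = γ₁λ₁, γ'ᵢ = λ_{i−1}⁻¹γᵢλᵢ for every 1 < i < n, and γ'ₙ = λ_{n−1}⁻¹γₙ (for n = 1 this means γ'₁ = γ₁). -/
/-- The elementary relation on the free monoid `F(Γ)`: the two-letter word `(γλ)·γ'`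
is related to the two-letter word `γ·(λγ')`, for `γ, γ' ∈ Γ` and `λ ∈ Λ`. -/
def wrel (Γ : Type*) [Group Γ] (Λ : Subgroup Γ) : FreeMonoid Γ → FreeMonoid Γ → Prop :=
  fun u v => ∃ γ γ' l : Γ, l ∈ Λ ∧
    u = FreeMonoid.of (γ * l) * FreeMonoid.of γ' ∧
    v = FreeMonoid.of γ * FreeMonoid.of (l * γ')

/-- The monoid congruence on `F(Γ)` generated by the relations `(γλ)·γ' ∼ γ·(λγ')`.
Its quotient is the monoid `W(Γ, Λ)`. -/
def Wcon (Γ : Type*) [Group Γ] (Λ : Subgroup Γ) : Con (FreeMonoid Γ) := conGen (wrel Γ Λ)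

/-- The class in `W(Γ, Λ)` of the word `γ₁⋯γₙ` given by `g : Fin n → Γ`. -/
def mkW {Γ : Type*} [Group Γ] (Λ : Subgroup Γ) {n : ℕ} (g : Fin n → Γ) :
    (Wcon Γ Λ).Quotient :=
  (Wcon Γ Λ).mk' (FreeMonoid.ofList (List.ofFn g))

section Aux
variable {Γ : Type*} [Group Γ] (Λ : Subgroup Γ)

/-- Auxiliary relation with carry `c`. -/
inductive Q : Γ → List Γ → List Γ → Prop
  | nil : Q 1 [] []
  | cons {c lam : Γ} {l m : List Γ} (a b : Γ) (hlam : lam ∈ Λ)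
      (hb : b = c⁻¹ * a * lam) (h : Q lam l m) : Q c (a :: l) (b :: m)

variable {Λ}

lemma Q.refl : ∀ l : List Γ, Q Λ 1 l l
  | [] => Q.nil
  | a :: l => Q.cons a a Λ.one_mem (by group) (Q.refl l)

lemma Q.symm : ∀ {c : Γ} {l m : List Γ}, Q Λ c l m → Q Λ c⁻¹ m l := by
  intro c l m h
  induction h with
  | nil => simpa using Q.nil
  | cons a b hlam hb h ih =>
    exact Q.cons b a (Λ.inv_mem hlam) (by subst hb; group) ih

lemma Q.trans : ∀ {c d : Γ} {l m k : List Γ}, Q Λ c l m → Q Λ d m k → Q Λ (c * d) l k := by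
  intro c d l m k h
  induction h generalizing d k with
  | nil =>
    intro h2
    cases h2
    simpa using Q.nil
  | cons a b hlam hb h ih =>
    intro h2
    cases h2 with
    | cons _ b2 hlam2 hb2 h2 =>
      exact Q.cons _ _ (Λ.mul_mem hlam hlam2) (by subst hb hb2; group) (ih h2)

lemma Q.append : ∀ {c : Γ} {l m l' m' : List Γ},
    Q Λ c l m → Q Λ 1 l' m' → Q Λ c (l ++ l') (m ++ m') := by
  intro c l m l' m' h h'
  induction h with
  | nil => simpa using h'
  | cons a b hlam hb h ih => exact Q.cons a b hlam hb ih

variable (Γ Λ) in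
/-- The congruence given by `Q` with trivial carry. -/
def Qcon : Con (FreeMonoid Γ) where
  r u v := Q Λ 1 u.toList v.toList
  iseqv := by
    refine ⟨fun u => Q.refl _, fun h => ?_, fun h h' => ?_⟩
    · simpa using h.symm
    · simpa using h.trans h'
  mul' := fun h h' => h.append h'

lemma Wcon_le_Qcon : Wcon Γ Λ ≤ Qcon Γ Λ := by
  apply Con.conGen_le.mpr
  rintro u v ⟨γ, γ', l, hl, rfl, rfl⟩
  exact Q.cons _ _ (Λ.inv_mem hl) (by group)
    (Q.cons _ _ Λ.one_mem (by group) Q.nil)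

lemma Q_to_Wcon_aux : ∀ {c : Γ} {l m : List Γ}, Q Λ c l m → c ∈ Λ →
    ∀ a : Γ, Wcon Γ Λ (FreeMonoid.ofList (a :: l)) (FreeMonoid.ofList ((a * c) :: m)) := by
  intro c l m h
  induction h with
  | nil =>
    intro _ a
    have : a * 1 = a := mul_one a
    rw [this]
    exact (Wcon Γ Λ).refl _
  | @cons c lam l m a' b hlam hb h ih =>
    intro hc a
    have step1 : Wcon Γ Λ (FreeMonoid.ofList (a :: a' :: l))
        (FreeMonoid.of (a * c) * FreeMonoid.ofList ((c⁻¹ * a') :: l)) := by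
      have gen : Wcon Γ Λ (FreeMonoid.of (a * c * c⁻¹) * FreeMonoid.of a')
          (FreeMonoid.of (a * c) * FreeMonoid.of (c⁻¹ * a')) :=
        ConGen.Rel.of _ _ ⟨a * c, a', c⁻¹, Λ.inv_mem hc, rfl, rfl⟩
      have : a * c * c⁻¹ = a := by group
      rw [this] at gen
      exact (Wcon Γ Λ).mul gen ((Wcon Γ Λ).refl (FreeMonoid.ofList l))
    have step2 : Wcon Γ Λ (FreeMonoid.of (a * c) * FreeMonoid.ofList ((c⁻¹ * a') :: l))
        (FreeMonoid.of (a * c) * FreeMonoid.ofList ((c⁻¹ * a' * lam) :: m)) :=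
      (Wcon Γ Λ).mul ((Wcon Γ Λ).refl _) (ih hlam (c⁻¹ * a'))
    have := (Wcon Γ Λ).trans step1 step2
    rw [hb]
    exact this

lemma Qcon_to_Wcon {l m : List Γ} (h : Q Λ 1 l m) :
    Wcon Γ Λ (FreeMonoid.ofList l) (FreeMonoid.ofList m) := by
  cases h with
  | nil => exact (Wcon Γ Λ).refl _
  | @cons _ lam l' m' a b hlam hb h =>
    have := Q_to_Wcon_aux h hlam a
    have hb' : b = a * lam := by rw [hb]; group
    rw [hb']
    exact this

lemma Q_of_lam : ∀ (n : ℕ) (g g' : Fin n → Γ) (lam : Fin (n + 1) → Γ),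
    (∀ i, lam i ∈ Λ) → lam (Fin.last n) = 1 →
    (∀ i : Fin n, g' i = (lam i.castSucc)⁻¹ * g i * lam i.succ) →
    Q Λ (lam 0) (List.ofFn g) (List.ofFn g') := by
  intro n
  induction n with
  | zero =>
    intro g g' lam _ hlast _
    simp only [List.ofFn_zero]
    have : lam 0 = 1 := hlast
    rw [this]
    exact Q.nil
  | succ n ih =>
    intro g g' lam hmem hlast hrel
    rw [List.ofFn_succ, List.ofFn_succ]
    refine Q.cons _ _ (hmem 1) ?_ ?_
    · have := hrel 0
      simpa using this
    · have := ih (g ∘ Fin.succ) (g' ∘ Fin.succ) (lam ∘ Fin.succ) (fun i => hmem _)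
        (by simp only [Function.comp_apply, Fin.succ_last]; exact hlast)
        (fun i => by
          have := hrel i.succ
          simp only [Function.comp_apply]
          rw [Fin.succ_castSucc]
          exact this)
      exact this

lemma lam_of_Q : ∀ (n : ℕ) (g g' : Fin n → Γ) (c : Γ), c ∈ Λ →
    Q Λ c (List.ofFn g) (List.ofFn g') →
    ∃ lam : Fin (n + 1) → Γ, (∀ i, lam i ∈ Λ) ∧ lam 0 = c ∧ lam (Fin.last n) = 1 ∧
      ∀ i : Fin n, g' i = (lam i.castSucc)⁻¹ * g i * lam i.succ := by
  intro n
  induction n with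
  | zero =>
    intro g g' c hc h
    simp only [List.ofFn_zero] at h
    cases h
    exact ⟨fun _ => 1, fun _ => Λ.one_mem, rfl, rfl, fun i => i.elim0⟩
  | succ n ih =>
    intro g g' c hc h
    rw [List.ofFn_succ, List.ofFn_succ] at h
    cases h with
    | @cons _ lam0 _ _ _ _ hlam hb h =>
      obtain ⟨lam, hmem, h0, hlastl, hrel⟩ := ih (g ∘ Fin.succ) (g' ∘ Fin.succ) lam0 hlam h
      refine ⟨Fin.cons c lam, ?_, rfl, ?_, ?_⟩
      · intro i
        refine Fin.cases ?_ ?_ i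
        · exact hc
        · intro j; simpa using hmem j
      · have hl : Fin.last (n + 1) = (Fin.last n).succ := rfl
        rw [hl, Fin.cons_succ]
        exact hlastl
      · intro i
        refine Fin.cases ?_ ?_ i
        · simpa [h0] using hb
        · intro j
          have := hrel j
          simp only [Function.comp_apply] at this
          rw [← Fin.succ_castSucc, Fin.cons_succ, Fin.cons_succ]
          exact this

end Aux

/-- The words `γ₁⋯γₙ` and `γ'₁⋯γ'ₙ` (with `n ≥ 1`) represent the same element of
`W(Γ, Λ)` if and only if there are `λ₁, …, λ_{n-1} ∈ Λ` with `γ'₁ = γ₁λ₁`,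
`γ'ᵢ = λ_{i-1}⁻¹γᵢλᵢ` for `1 < i < n` and `γ'ₙ = λ_{n-1}⁻¹γₙ`. Here the `λ`'s are
encoded as a function `lam : Fin (n+1) → Γ` with `lam 0 = lam n = 1` and all values
in `Λ`, via `γ'ᵢ = (lam (i-1))⁻¹ γᵢ (lam i)` (`1`-indexed). -/
theorem WM_eq_iff (Γ : Type*) [Group Γ] (Λ : Subgroup Γ) (n : ℕ) (hn : 1 ≤ n)
    (g g' : Fin n → Γ) :
    mkW Λ g = mkW Λ g' ↔
      ∃ lam : Fin (n + 1) → Γ, (∀ i, lam i ∈ Λ) ∧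
        lam 0 = 1 ∧ lam (Fin.last n) = 1 ∧
        ∀ i : Fin n, g' i = (lam i.castSucc)⁻¹ * g i * lam i.succ := by
  constructor
  · intro h
    have hw : Wcon Γ Λ (FreeMonoid.ofList (List.ofFn g)) (FreeMonoid.ofList (List.ofFn g')) :=
      (Con.eq _).mp h
    have hq : Q Λ 1 (List.ofFn g) (List.ofFn g') := Wcon_le_Qcon hw
    exact lam_of_Q n g g' 1 Λ.one_mem hq
  · rintro ⟨lam, hmem, h0, hlast, hrel⟩
    have hq : Q Λ (lam 0) (List.ofFn g) (List.ofFn g') := Q_of_lam n g g' lam hmem hlast hrel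
    rw [h0] at hq
    exact (Con.eq _).mpr (Qcon_to_Wcon hq)
end
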